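/- Let a < b, let f : ℝ → ℝ be twice continuously differentiable, let x₀ satisfy the initial-data conditions, let ε > 0, and let x be a classical solution of the ε-regularized problem such that in addition the mixed derivative ∂_t x_u exists and is continuous on [a,b]×(0,∞). Then for every t > 0 the function E(t) := ½∫ₐᵇ x_u(u,t)² du + ∫ₐᵇ f(u) x(u,t) du is differentiable at t and E'(t) ≤ −∫ₐᵇ x_u(u,t)² x_t(u,t)² du. -/

import Mathlib

open Set MeasureTheory

lemma sliceContAux {a b : ℝ} {S : Set ℝ} {g : ℝ → ℝ → ℝ}
    (hg : ContinuousOn (fun p : ℝ × ℝ => g p.1 p.2) (Set.Icc a b ×ˢ S)) {s : ℝ} (hs : s ∈ S) :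
    ContinuousOn (fun u => g u s) (Set.Icc a b) :=
  hg.comp ((continuous_id.prodMk continuous_const).continuousOn)
    (fun u hu => Set.mk_mem_prod hu hs)

lemma hasDerivAt_param_integral {a b : ℝ} (hab : a ≤ b) (g gt : ℝ → ℝ → ℝ)
    (hgc : ContinuousOn (fun p : ℝ × ℝ => g p.1 p.2) (Set.Icc a b ×ˢ Set.Ioi 0))
    (hgtc : ContinuousOn (fun p : ℝ × ℝ => gt p.1 p.2) (Set.Icc a b ×ˢ Set.Ioi 0))
    (hd : ∀ u ∈ Set.Icc a b, ∀ t : ℝ, 0 < t → HasDerivAt (fun s => g u s) (gt u t) t)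
    {t₀ : ℝ} (ht₀ : 0 < t₀) :
    HasDerivAt (fun s => ∫ u in a..b, g u s) (∫ u in a..b, gt u t₀) t₀ := by
  set δ := t₀ / 2 with hδdef
  have hδpos : 0 < δ := by positivity
  have hKsub : (Set.Icc a b ×ˢ Set.Icc δ (t₀ + δ)) ⊆ Set.Icc a b ×ˢ Set.Ioi 0 :=
    Set.prod_mono subset_rfl (fun s hs => lt_of_lt_of_le hδpos hs.1)
  have hK : IsCompact (Set.Icc a b ×ˢ Set.Icc δ (t₀ + δ)) := isCompact_Icc.prod isCompact_Icc
  obtain ⟨C, hC⟩ := hK.exists_bound_of_continuousOn (hgtc.mono hKsub)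
  have hball : Metric.ball t₀ δ ⊆ Set.Icc δ (t₀ + δ) := by
    intro s hs
    rw [Metric.mem_ball, Real.dist_eq] at hs
    have := abs_lt.1 hs
    constructor <;> [linarith [this.1]; linarith [this.2]]
  have hIsub : Set.uIoc a b ⊆ Set.Icc a b := by
    rw [Set.uIoc_of_le hab]; exact Set.Ioc_subset_Icc_self
  refine (intervalIntegral.hasDerivAt_integral_of_dominated_loc_of_deriv_le
    (μ := volume) (a := a) (b := b)
    (F := fun s u => g u s) (F' := fun s u => gt u s) (x₀ := t₀) (bound := fun _ => C)
    (Metric.ball_mem_nhds t₀ hδpos) ?_ ?_ ?_ ?_ ?_ ?_).2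
  · filter_upwards [Ioi_mem_nhds ht₀] with s hs
    exact ((sliceContAux hgc hs).mono hIsub).aestronglyMeasurable measurableSet_uIoc
  · exact ((sliceContAux hgc (Set.mem_Ioi.2 ht₀)).mono (by rw [Set.uIcc_of_le hab])).intervalIntegrable
  · exact ((sliceContAux hgtc (Set.mem_Ioi.2 ht₀)).mono hIsub).aestronglyMeasurable measurableSet_uIoc
  · apply ae_of_all
    intro u hu s hs
    exact hC (u, s) ⟨hIsub hu, hball hs⟩
  · exact intervalIntegrable_const
  · apply ae_of_all
    intro u hu s hs
    exact hd u (hIsub hu) s (lt_of_lt_of_le hδpos (hball hs).1)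


/-- Initial-data conditions (\(\ref{cond:x0}\)) with explicit first and second
derivative witnesses `x₀'`, `x₀''` and Hölder exponent `β`. -/
def InitDataW (a b : ℝ) (x₀ x₀' x₀'' : ℝ → ℝ) (β : ℝ) : Prop :=
  β ∈ Set.Ioo (0:ℝ) 1 ∧
  (∀ u ∈ Set.Icc a b, HasDerivWithinAt x₀ (x₀' u) (Set.Icc a b) u) ∧
  (∀ u ∈ Set.Icc a b, HasDerivWithinAt x₀' (x₀'' u) (Set.Icc a b) u) ∧
  ContinuousOn x₀'' (Set.Icc a b) ∧
  (∃ C : ℝ, ∀ u ∈ Set.Icc a b, ∀ v ∈ Set.Icc a b, |x₀'' u - x₀'' v| ≤ C * |u - v| ^ β) ∧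
  x₀ a = -1 ∧ x₀ b = 1 ∧ x₀'' a = a ∧ x₀'' b = b ∧
  (∀ u ∈ Set.Icc a b, 0 < x₀' u)

/-- A classical solution of the `ε`-regularized problem \eqref{xepseq}:
`x` is continuous on `[a,b] × [0,∞)` together with its partial derivatives
`x_u`, `x_uu` (within `[a,b]` in space) and `x_t` (within `[0,∞)` in time),
satisfies `x_t = (x_uu - f(u))/(x_u² + ε)` on `(a,b) × (0,∞)`, the boundary
conditions `x(a,t) = -1`, `x(b,t) = 1`, and `x(·,0) = x₀`. -/
def IsClassicalSolEps (a b ε : ℝ) (f x₀ : ℝ → ℝ) (x xu xuu xt : ℝ → ℝ → ℝ) : Prop :=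
  ContinuousOn (fun p : ℝ × ℝ => x p.1 p.2) (Set.Icc a b ×ˢ Set.Ici 0) ∧
  ContinuousOn (fun p : ℝ × ℝ => xu p.1 p.2) (Set.Icc a b ×ˢ Set.Ici 0) ∧
  ContinuousOn (fun p : ℝ × ℝ => xuu p.1 p.2) (Set.Icc a b ×ˢ Set.Ici 0) ∧
  ContinuousOn (fun p : ℝ × ℝ => xt p.1 p.2) (Set.Icc a b ×ˢ Set.Ici 0) ∧
  (∀ t : ℝ, 0 ≤ t → ∀ u ∈ Set.Icc a b,
      HasDerivWithinAt (fun v => x v t) (xu u t) (Set.Icc a b) u) ∧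
  (∀ t : ℝ, 0 ≤ t → ∀ u ∈ Set.Icc a b,
      HasDerivWithinAt (fun v => xu v t) (xuu u t) (Set.Icc a b) u) ∧
  (∀ u ∈ Set.Icc a b, ∀ t : ℝ, 0 ≤ t →
      HasDerivWithinAt (fun s => x u s) (xt u t) (Set.Ici 0) t) ∧
  (∀ u ∈ Set.Ioo a b, ∀ t : ℝ, 0 < t →
      xt u t = (xuu u t - f u) / ((xu u t) ^ 2 + ε)) ∧
  (∀ t : ℝ, 0 ≤ t → x a t = -1 ∧ x b t = 1) ∧
  (∀ u ∈ Set.Icc a b, x u 0 = x₀ u)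

/-- Lemma 2.3 (energy inequality): for a classical solution of the regularized
problem whose mixed derivative `∂_t x_u` exists and is continuous on
`[a,b] × (0,∞)`, the energy
`E(t) = ½∫ₐᵇ x_u² du + ∫ₐᵇ f(u) x du` is differentiable for `t > 0`, with
`E'(t) ≤ -∫ₐᵇ x_u² x_t² du`. -/
theorem lem_energy (a b : ℝ) (hab : a < b) (f : ℝ → ℝ) (hf : ContDiff ℝ 2 f)
    (x₀ x₀' x₀'' : ℝ → ℝ) (β : ℝ) (h₀ : InitDataW a b x₀ x₀' x₀'' β)
    (ε : ℝ) (hε : 0 < ε) (x xu xuu xt : ℝ → ℝ → ℝ)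
    (hsol : IsClassicalSolEps a b ε f x₀ x xu xuu xt)
    (xut : ℝ → ℝ → ℝ)
    (hxut : ∀ u ∈ Set.Icc a b, ∀ t : ℝ, 0 < t →
      HasDerivAt (fun s => xu u s) (xut u t) t)
    (hcxut : ContinuousOn (fun p : ℝ × ℝ => xut p.1 p.2) (Set.Icc a b ×ˢ Set.Ioi 0)) :
    ∀ t : ℝ, 0 < t → ∃ E' : ℝ,
      HasDerivAt
        (fun s => (1/2 : ℝ) * (∫ u in a..b, (xu u s) ^ 2) + ∫ u in a..b, f u * x u s)
        E' t ∧
      E' ≤ -∫ u in a..b, (xu u t) ^ 2 * (xt u t) ^ 2 := by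


  obtain ⟨hcx, hcxu, hcxuu, hcxt, hdx, hdxu, hdxt, hpde, hbc, hic⟩ := hsol
  intro t ht
  have hab' : a ≤ b := hab.le
  have huIcc : uIcc a b = Icc a b := uIcc_of_le hab'
  have psub : Icc a b ×ˢ Ioi (0:ℝ) ⊆ Icc a b ×ˢ Ici 0 :=
    Set.prod_mono subset_rfl Ioi_subset_Ici_self
  have intgr : ∀ (h : ℝ → ℝ), ContinuousOn h (Icc a b) → IntervalIntegrable h volume a b :=
    fun h hh => (hh.mono huIcc.le).intervalIntegrable
  -- full time derivative of x at positive times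
  have hxtAt : ∀ u ∈ Icc a b, ∀ s : ℝ, 0 < s → HasDerivAt (fun s => x u s) (xt u s) s :=
    fun u hu s hs => (hdxt u hu s hs.le).hasDerivAt (Ici_mem_nhds hs)
  -- frozen-time continuity on the product
  have frozen : ∀ (g : ℝ → ℝ → ℝ),
      ContinuousOn (fun p : ℝ × ℝ => g p.1 p.2) (Icc a b ×ˢ Ici 0) →
      ContinuousOn (fun p : ℝ × ℝ => g p.1 t) (Icc a b ×ˢ Ioi 0) :=
    fun g hg => (sliceContAux hg (mem_Ici.2 ht.le)).comp continuous_fst.continuousOn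
      (fun p hp => hp.1)
  -- derivative of A(s) = ∫ xu² du
  have hA : HasDerivAt (fun s => ∫ u in a..b, (xu u s) ^ 2)
      (∫ u in a..b, 2 * xu u t * xut u t) t := by
    apply hasDerivAt_param_integral hab' _ _ ((hcxu.mono psub).pow 2)
      ((continuousOn_const.mul (hcxu.mono psub)).mul hcxut) _ ht
    intro u hu s hs
    simpa using (hxut u hu s hs).fun_pow 2
  -- derivative of B(s) = ∫ f·x du
  have hB : HasDerivAt (fun s => ∫ u in a..b, f u * x u s)
      (∫ u in a..b, f u * xt u t) t := by
    apply hasDerivAt_param_integral hab' _ _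
      (((hf.continuous.comp continuous_fst).continuousOn).mul (hcx.mono psub))
      (((hf.continuous.comp continuous_fst).continuousOn).mul (hcxt.mono psub)) _ ht
    intro u hu s hs
    exact (hxtAt u hu s hs).const_mul (f u)
  -- derivative of G(s) = ∫ xu(·,t) xu(·,s) du
  have hG : HasDerivAt (fun s => ∫ u in a..b, xu u t * xu u s)
      (∫ u in a..b, xu u t * xut u t) t := by
    apply hasDerivAt_param_integral hab' (fun u s => xu u t * xu u s)
      (fun u s => xu u t * xut u s) ((frozen xu hcxu).mul (hcxu.mono psub))
      ((frozen xu hcxu).mul hcxut) _ ht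
    intro u hu s hs
    exact (hxut u hu s hs).const_mul (xu u t)
  -- derivative of H(s) = ∫ xuu(·,t) x(·,s) du
  have hH : HasDerivAt (fun s => ∫ u in a..b, xuu u t * x u s)
      (∫ u in a..b, xuu u t * xt u t) t := by
    apply hasDerivAt_param_integral hab' (fun u s => xuu u t * x u s)
      (fun u s => xuu u t * xt u s) ((frozen xuu hcxuu).mul (hcx.mono psub))
      ((frozen xuu hcxuu).mul (hcxt.mono psub)) _ ht
    intro u hu s hs
    exact (hxtAt u hu s hs).const_mul (xuu u t)
  -- integration by parts at each time s ≥ 0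
  have hibp : ∀ s : ℝ, 0 ≤ s → (∫ u in a..b, xu u t * xu u s)
      = (xu b t + xu a t) - ∫ u in a..b, xuu u t * x u s := by
    intro s hs
    have hXu : ∀ v ∈ uIcc a b, HasDerivWithinAt (fun w => xu w t) (xuu v t) (uIcc a b) v := by
      rw [huIcc]; exact fun v hv => hdxu t ht.le v hv
    have hX : ∀ v ∈ uIcc a b, HasDerivWithinAt (fun w => x w s) (xu v s) (uIcc a b) v := by
      rw [huIcc]; exact fun v hv => hdx s hs v hv
    have hint1 : IntervalIntegrable (fun v => xuu v t) volume a b :=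
      intgr _ (sliceContAux hcxuu (mem_Ici.2 ht.le))
    have hint2 : IntervalIntegrable (fun v => xu v s) volume a b :=
      intgr _ (sliceContAux hcxu (mem_Ici.2 hs))
    have h1 := intervalIntegral.integral_deriv_mul_eq_sub_of_hasDerivWithinAt hXu hX hint1 hint2
    have ha' : x a s = -1 := (hbc s hs).1
    have hb' : x b s = 1 := (hbc s hs).2
    rw [ha', hb'] at h1
    have hadd : IntervalIntegrable (fun u => xuu u t * x u s) volume a b :=
      intgr _ ((sliceContAux hcxuu (mem_Ici.2 ht.le)).mul (sliceContAux hcx (mem_Ici.2 hs)))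
    have hadd2 : IntervalIntegrable (fun u => xu u t * xu u s) volume a b :=
      intgr _ ((sliceContAux hcxu (mem_Ici.2 ht.le)).mul (sliceContAux hcxu (mem_Ici.2 hs)))
    rw [intervalIntegral.integral_add hadd hadd2] at h1
    linarith [h1]
  -- conclude: ∫ xu xut = -∫ xuu xt
  have hGH : (∫ u in a..b, xu u t * xut u t) = -(∫ u in a..b, xuu u t * xt u t) := by
    have hψ : HasDerivAt (fun s => (xu b t + xu a t) - ∫ u in a..b, xuu u t * x u s)
        (-(∫ u in a..b, xuu u t * xt u t)) t := hH.const_sub _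
    have heq : (fun s => ∫ u in a..b, xu u t * xu u s)
        =ᶠ[nhds t] (fun s => (xu b t + xu a t) - ∫ u in a..b, xuu u t * x u s) := by
      filter_upwards [Ioi_mem_nhds ht] with s hs using hibp s (le_of_lt hs)
    exact hG.unique (hψ.congr_of_eventuallyEq heq)
  -- final assembly
  refine ⟨(1/2 : ℝ) * (∫ u in a..b, 2 * xu u t * xut u t) + ∫ u in a..b, f u * xt u t,
    (hA.const_mul (1/2 : ℝ)).add hB, ?_⟩
  have h2I : (∫ u in a..b, 2 * xu u t * xut u t) = 2 * ∫ u in a..b, xu u t * xut u t := by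
    rw [← intervalIntegral.integral_const_mul]
    exact intervalIntegral.integral_congr (fun u _ => by ring)
  -- integrabilities
  have icxt : ContinuousOn (fun u => xt u t) (Icc a b) := sliceContAux hcxt (mem_Ici.2 ht.le)
  have icxu : ContinuousOn (fun u => xu u t) (Icc a b) := sliceContAux hcxu (mem_Ici.2 ht.le)
  have icxuu : ContinuousOn (fun u => xuu u t) (Icc a b) := sliceContAux hcxuu (mem_Ici.2 ht.le)
  have i1 : IntervalIntegrable (fun u => xuu u t * xt u t) volume a b :=
    intgr _ (icxuu.mul icxt)
  have i2 : IntervalIntegrable (fun u => f u * xt u t) volume a b :=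
    intgr _ (hf.continuous.continuousOn.mul icxt)
  have i3 : IntervalIntegrable (fun u => (xu u t) ^ 2 * (xt u t) ^ 2) volume a b :=
    intgr _ ((icxu.pow 2).mul (icxt.pow 2))
  have i4 : IntervalIntegrable (fun u => ε * (xt u t) ^ 2) volume a b :=
    intgr _ (continuousOn_const.mul (icxt.pow 2))
  -- combine: -∫ xuu xt + ∫ f xt = -∫ (xuu - f) xt
  have hcomb : -(∫ u in a..b, xuu u t * xt u t) + (∫ u in a..b, f u * xt u t)
      = -∫ u in a..b, (xuu u t - f u) * xt u t := by
    have : (∫ u in a..b, (xuu u t - f u) * xt u t)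
        = (∫ u in a..b, xuu u t * xt u t) - ∫ u in a..b, f u * xt u t := by
      rw [← intervalIntegral.integral_sub i1 i2]
      exact intervalIntegral.integral_congr (fun u _ => by ring)
    rw [this]; ring
  -- apply the PDE
  have hpde' : (∫ u in a..b, (xuu u t - f u) * xt u t)
      = ∫ u in a..b, ((xu u t) ^ 2 * (xt u t) ^ 2 + ε * (xt u t) ^ 2) := by
    apply intervalIntegral.integral_congr_ae
    have hbne : ∀ᵐ u : ℝ ∂volume, u ≠ b := by
      rw [ae_iff]
      simp
    filter_upwards [hbne] with u hu hmem
    rw [Set.uIoc_of_le hab'] at hmem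
    have huo : u ∈ Ioo a b := ⟨hmem.1, lt_of_le_of_ne hmem.2 hu⟩
    have hD : (0:ℝ) < (xu u t) ^ 2 + ε := by positivity
    have heq := hpde u huo t ht
    have h2 : xuu u t - f u = ((xu u t) ^ 2 + ε) * xt u t := by
      rw [heq]; field_simp
    rw [h2]; ring
  have hsplit : (∫ u in a..b, ((xu u t) ^ 2 * (xt u t) ^ 2 + ε * (xt u t) ^ 2))
      = (∫ u in a..b, (xu u t) ^ 2 * (xt u t) ^ 2) + ε * ∫ u in a..b, (xt u t) ^ 2 := by
    rw [intervalIntegral.integral_add i3 i4, intervalIntegral.integral_const_mul]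
  have hnn : 0 ≤ ∫ u in a..b, (xt u t) ^ 2 :=
    intervalIntegral.integral_nonneg hab' (fun u _ => sq_nonneg _)
  have hεnn : 0 ≤ ε * ∫ u in a..b, (xt u t) ^ 2 := mul_nonneg hε.le hnn
  calc (1/2 : ℝ) * (∫ u in a..b, 2 * xu u t * xut u t) + ∫ u in a..b, f u * xt u t
      = (∫ u in a..b, xu u t * xut u t) + ∫ u in a..b, f u * xt u t := by
        rw [h2I]; ring
    _ = -(∫ u in a..b, xuu u t * xt u t) + ∫ u in a..b, f u * xt u t := by rw [hGH]
    _ = -∫ u in a..b, (xuu u t - f u) * xt u t := hcomb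
    _ = -((∫ u in a..b, (xu u t) ^ 2 * (xt u t) ^ 2) + ε * ∫ u in a..b, (xt u t) ^ 2) := by
        rw [hpde', hsplit]
    _ ≤ -∫ u in a..b, (xu u t) ^ 2 * (xt u t) ^ 2 := by linarith
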